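/- Let N ≥ 1 and let A be a partition of {1,...,N} into paths of the divisor graph with the minimal possible number of paths F(N). Let n ≤ N be factorizing for A, i.e., every path of A containing a multiple of n consists entirely of multiples of n. Then the paths of A containing multiples of n are exactly of the form n·D₁, ..., n·D_g where D₁, ..., D_g is a partition of {1, ..., ⌊N/n⌋} into paths of the divisor graph with g = F(⌊N/n⌋), the minimal possible number. -/

import Mathlib

/-- A path of the divisor graph. -/
def IsDivPath (l : List ℕ) : Prop :=
  l ≠ [] ∧ l.Nodup ∧ (∀ x ∈ l, 0 < x) ∧ l.Chain' (fun a b => a ∣ b ∨ b ∣ a)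

/-- A partition of `{1,...,N}` into paths of the divisor graph. -/
def IsPathPartition (N : ℕ) (P : List (List ℕ)) : Prop :=
  (∀ l ∈ P, IsDivPath l) ∧
  P.Pairwise (fun l m => ∀ x ∈ l, x ∉ m) ∧
  (∀ x : ℕ, (1 ≤ x ∧ x ≤ N) ↔ ∃ l ∈ P, x ∈ l)

/-- `F N` is the minimal number of paths in a partition of `{1,...,N}` into
paths of the divisor graph. -/
noncomputable def F (N : ℕ) : ℕ :=
  sInf {k | ∃ P : List (List ℕ), IsPathPartition N P ∧ P.length = k}

lemma scale_divpath {n : ℕ} (hn : 0 < n) {l : List ℕ} (h : IsDivPath l) :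
    IsDivPath (l.map (fun x => n * x)) := by
  obtain ⟨h1, h2, h3, h4⟩ := h
  refine ⟨by simpa using h1, h2.map (mul_right_injective₀ hn.ne'), ?_, ?_⟩
  · intro x hx
    simp only [List.mem_map] at hx
    obtain ⟨y, hy, rfl⟩ := hx
    exact Nat.mul_pos hn (h3 y hy)
  · unfold List.Chain' at h4 ⊢; rw [List.isChain_map]
    exact h4.imp fun {a b} hab =>
      hab.imp (fun h => mul_dvd_mul_left n h) (fun h => mul_dvd_mul_left n h)

lemma unscale_divpath {n : ℕ} (hn : 0 < n) {l : List ℕ}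
    (h : IsDivPath (l.map (fun x => n * x))) : IsDivPath l := by
  obtain ⟨h1, h2, h3, h4⟩ := h
  refine ⟨by simpa using h1, h2.of_map _, ?_, ?_⟩
  · intro x hx
    have h := h3 (n * x) (List.mem_map_of_mem hx)
    rcases Nat.eq_zero_or_pos x with rfl | hx0
    · simp at h
    · exact hx0
  · unfold List.Chain' at h4 ⊢; rw [List.isChain_map] at h4
    exact h4.imp fun {a b} hab =>
      hab.imp (fun h => (mul_dvd_mul_iff_left hn.ne').mp h)
        (fun h => (mul_dvd_mul_iff_left hn.ne').mp h)

theorem stmt_15 (N n : ℕ) (hN : 1 ≤ N) (hn : 1 ≤ n) (hnN : n ≤ N)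
    (A : List (List ℕ)) (hA : IsPathPartition N A) (hopt : A.length = F N)
    (hfact : ∀ l ∈ A, (∃ x ∈ l, n ∣ x) → ∀ x ∈ l, n ∣ x) :
    ∃ D : List (List ℕ), IsPathPartition (N / n) D ∧ D.length = F (N / n) ∧
      (A.filter (fun l => decide (∃ x ∈ l, n ∣ x))).Perm
        (D.map (fun l => l.map (fun x => n * x))) := by
  have hn0 : 0 < n := hn
  obtain ⟨hApath, hAdisj, hAcov⟩ := hA
  set p : List ℕ → Bool := fun l => decide (∃ x ∈ l, n ∣ x) with hp
  set B := A.filter p with hB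
  set C := A.filter (fun l => !p l) with hC
  -- membership characterizations
  have hmemB : ∀ l, l ∈ B ↔ l ∈ A ∧ ∃ x ∈ l, n ∣ x := by
    intro l; rw [hB, List.mem_filter]; simp [hp]
  have hmemC : ∀ l, l ∈ C ↔ l ∈ A ∧ ∀ x ∈ l, ¬ n ∣ x := by
    intro l; rw [hC, List.mem_filter]; simp [hp]
  have hBdvd : ∀ l ∈ B, ∀ x ∈ l, n ∣ x := by
    intro l hl
    obtain ⟨hlA, hex⟩ := (hmemB l).mp hl
    exact hfact l hlA hex
  set D := B.map (fun l => l.map (fun x => x / n)) with hD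
  have hback : ∀ l ∈ B, (l.map (fun x => x / n)).map (fun x => n * x) = l := by
    intro l hl
    rw [List.map_map]
    conv_rhs => rw [← List.map_id l]
    refine List.map_congr_left fun x hx => ?_
    simp [Nat.mul_div_cancel' (hBdvd l hl x hx)]
  have hDB : D.map (fun l => l.map (fun x => n * x)) = B := by
    rw [hD, List.map_map]
    conv_rhs => rw [← List.map_id B]
    exact List.map_congr_left fun l hl => hback l hl
  -- D is a path partition of N / n
  have hDpart : IsPathPartition (N / n) D := by
    refine ⟨?_, ?_, ?_⟩
    · intro d hd
      rw [hD, List.mem_map] at hd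
      obtain ⟨l, hl, rfl⟩ := hd
      apply unscale_divpath hn0
      rw [hback l hl]
      exact hApath l ((hmemB l).mp hl).1
    · rw [hD, List.pairwise_map]
      have : B.Pairwise (fun l m => ∀ x ∈ l, x ∉ m) := hAdisj.filter p
      refine this.imp_of_mem ?_
      intro l m hl hm h y hyl hym
      simp only [List.mem_map] at hyl hym
      obtain ⟨x, hx, rfl⟩ := hyl
      obtain ⟨x', hx', hxx'⟩ := hym
      have e1 : x = x' := by
        have d1 := hBdvd l hl x hx
        have d2 := hBdvd m hm x' hx'
        obtain ⟨a, rfl⟩ := d1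
        obtain ⟨b, rfl⟩ := d2
        rw [Nat.mul_div_cancel_left a hn0, Nat.mul_div_cancel_left b hn0] at hxx'
        rw [hxx']
      exact h x hx (e1 ▸ hx')
    · intro y
      constructor
      · rintro ⟨hy1, hy2⟩
        have h1 : 1 ≤ n * y := Nat.mul_pos hn0 hy1
        have h2 : n * y ≤ N := by rw [mul_comm]; exact (Nat.le_div_iff_mul_le hn0).mp hy2
        obtain ⟨l, hl, hmem⟩ := (hAcov (n * y)).mp ⟨h1, h2⟩
        have hlB : l ∈ B := (hmemB l).mpr ⟨hl, ⟨n * y, hmem, Dvd.intro y rfl⟩⟩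
        refine ⟨l.map (fun x => x / n), List.mem_map_of_mem hlB, ?_⟩
        rw [List.mem_map]
        exact ⟨n * y, hmem, Nat.mul_div_cancel_left y hn0⟩
      · rintro ⟨d, hd, hyd⟩
        rw [hD, List.mem_map] at hd
        obtain ⟨l, hl, rfl⟩ := hd
        rw [List.mem_map] at hyd
        obtain ⟨x, hx, rfl⟩ := hyd
        have hxN : 1 ≤ x ∧ x ≤ N := (hAcov x).mpr ⟨l, ((hmemB l).mp hl).1, hx⟩
        have hdvd := hBdvd l hl x hx
        constructor
        · rw [Nat.one_le_div_iff hn0]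
          exact Nat.le_of_dvd hxN.1 hdvd
        · exact Nat.div_le_div_right hxN.2
    -- end coverage
  -- the F (N/n) set
  set S : Set ℕ := {k | ∃ P : List (List ℕ), IsPathPartition (N / n) P ∧ P.length = k} with hS
  have hSne : S.Nonempty := ⟨D.length, D, hDpart, rfl⟩
  have hF1 : F (N / n) ≤ B.length := by
    have : F (N / n) ≤ D.length := Nat.sInf_le ⟨D, hDpart, rfl⟩
    simpa [hD] using this
  -- get an optimal partition P of N / n
  obtain ⟨P, hPpart, hPlen⟩ : ∃ P : List (List ℕ), IsPathPartition (N / n) P ∧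
      P.length = F (N / n) := Nat.sInf_mem hSne
  -- build new partition of N
  set A' := C ++ P.map (fun l => l.map (fun x => n * x)) with hA'
  obtain ⟨hPpath, hPdisj, hPcov⟩ := hPpart
  have hA'part : IsPathPartition N A' := by
    refine ⟨?_, ?_, ?_⟩
    · intro l hl
      rw [hA', List.mem_append] at hl
      rcases hl with hl | hl
      · exact hApath l ((hmemC l).mp hl).1
      · rw [List.mem_map] at hl
        obtain ⟨m, hm, rfl⟩ := hl
        exact scale_divpath hn0 (hPpath m hm)
    · rw [hA', List.pairwise_append]
      refine ⟨hAdisj.filter _, ?_, ?_⟩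
      · rw [List.pairwise_map]
        refine hPdisj.imp_of_mem ?_
        intro l m hl hm h y hyl hym
        simp only [List.mem_map] at hyl hym
        obtain ⟨x, hx, rfl⟩ := hyl
        obtain ⟨x', hx', hxx'⟩ := hym
        have : x = x' := Nat.eq_of_mul_eq_mul_left hn0 hxx'.symm
        exact h x hx (this ▸ hx')
      · intro l hl m hm x hxl hxm
        have hC2 := ((hmemC l).mp hl).2
        rw [List.mem_map] at hm
        obtain ⟨m', hm', rfl⟩ := hm
        rw [List.mem_map] at hxm
        obtain ⟨y, hy, rfl⟩ := hxm
        exact hC2 _ hxl ⟨y, rfl⟩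
    · intro x
      constructor
      · rintro ⟨hx1, hx2⟩
        by_cases hdvd : n ∣ x
        · obtain ⟨y, rfl⟩ := hdvd
          have hy1 : 1 ≤ y := by
            rcases Nat.eq_zero_or_pos y with rfl | h
            · simp at hx1
            · exact h
          have hy2 : y ≤ N / n := by
            rw [Nat.le_div_iff_mul_le hn0, mul_comm]; exact hx2
          obtain ⟨m, hm, hym⟩ := (hPcov y).mp ⟨hy1, hy2⟩
          refine ⟨m.map (fun z => n * z), ?_, List.mem_map_of_mem hym⟩
          rw [hA', List.mem_append]
          exact Or.inr (List.mem_map_of_mem hm)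
        · obtain ⟨l, hl, hxl⟩ := (hAcov x).mp ⟨hx1, hx2⟩
          have hlC : l ∈ C := by
            rw [hmemC]
            refine ⟨hl, fun z hz hdz => ?_⟩
            exact hdvd (hfact l hl ⟨z, hz, hdz⟩ x hxl)
          exact ⟨l, by rw [hA', List.mem_append]; exact Or.inl hlC, hxl⟩
      · rintro ⟨l, hl, hxl⟩
        rw [hA', List.mem_append] at hl
        rcases hl with hl | hl
        · exact (hAcov x).mpr ⟨l, ((hmemC l).mp hl).1, hxl⟩
        · rw [List.mem_map] at hl
          obtain ⟨m, hm, rfl⟩ := hl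
          rw [List.mem_map] at hxl
          obtain ⟨y, hy, rfl⟩ := hxl
          have := (hPcov y).mpr ⟨m, hm, hy⟩
          constructor
          · exact Nat.mul_pos hn0 this.1
          · calc n * y ≤ n * (N / n) := Nat.mul_le_mul_left n this.2
              _ ≤ N := Nat.mul_div_le N n
  -- length comparison
  have hlenA : B.length + C.length = A.length := by
    have := (List.filter_append_perm p A).length_eq
    simpa [hB, hC] using this
  have hFN : F N ≤ A'.length := Nat.sInf_le ⟨A', hA'part, rfl⟩
  have hA'len : A'.length = C.length + F (N / n) := by
    simp [hA', hPlen]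
  have hF2 : B.length ≤ F (N / n) := by
    have : A.length ≤ C.length + F (N / n) := by
      rw [← hA'len, hopt]; exact hFN
    omega
  have hFeq : B.length = F (N / n) := le_antisymm hF2 hF1
  refine ⟨D, hDpart, ?_, ?_⟩
  · rw [hD, List.length_map]; exact hFeq
  · rw [hDB]
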